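/- For all convex bodies K, L ⊂ [0,1]² and every N ∈ ℕ₀, the Euclidean distance of the geometric moment vectors is controlled by the Nikodym distance: (∑_{i,j=0}^N (μ_{ij}(K) − μ_{ij}(L))²)^{1/2} ≤ (1 + (1/2)·ln(2N+1)) · δ_N(K,L)^{1/2}. -/

import Mathlib

open MeasureTheory Real

/-- The closed unit square `[0,1]² ⊆ ℝ²`. -/
def unitSq : Set (ℝ × ℝ) := Set.Icc (0, 0) (1, 1)

/-- A convex body in `ℝ²`: a compact convex set with nonempty interior. -/
def IsConvexBody (K : Set (ℝ × ℝ)) : Prop :=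
  IsCompact K ∧ Convex ℝ K ∧ (interior K).Nonempty

/-- The geometric moment `μ_{ij}(K) = ∫_K x₁^i x₂^j dx` of a set `K ⊆ ℝ²`. -/
noncomputable def geomMoment (i j : ℕ) (K : Set (ℝ × ℝ)) : ℝ :=
  ∫ x in K, x.1 ^ i * x.2 ^ j

/-- The Nikodym distance: the area of the symmetric difference. -/
noncomputable def nikodymDist (K L : Set (ℝ × ℝ)) : ℝ :=
  (volume ((K \ L) ∪ (L \ K))).toReal

lemma unitSq_eq : unitSq = Set.Icc (0:ℝ) 1 ×ˢ Set.Icc (0:ℝ) 1 := by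
  rw [unitSq, Set.Icc_prod_Icc]

lemma unitSq_compact : IsCompact unitSq := by
  rw [unitSq_eq]; exact isCompact_Icc.prod isCompact_Icc

lemma integrableOn_unitSq (i j : ℕ) :
    IntegrableOn (fun x : ℝ × ℝ => x.1 ^ i * x.2 ^ j) unitSq volume :=
  (((continuous_fst.pow i).mul (continuous_snd.pow j)).continuousOn).integrableOn_compact
    unitSq_compact

lemma integral_unitSq_pow (a b : ℕ) :
    ∫ x in unitSq, x.1 ^ a * x.2 ^ b = (1 / ((a : ℝ) + 1)) * (1 / ((b : ℝ) + 1)) := by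
  have h1 : ∀ n : ℕ, ∫ x in Set.Icc (0:ℝ) 1, x ^ n = 1 / ((n : ℝ) + 1) := by
    intro n
    rw [MeasureTheory.integral_Icc_eq_integral_Ioc,
      ← intervalIntegral.integral_of_le (zero_le_one), integral_pow]
    simp
  rw [unitSq_eq, MeasureTheory.Measure.volume_eq_prod,
    MeasureTheory.setIntegral_prod_mul (fun x : ℝ => x ^ a) (fun x : ℝ => x ^ b), h1, h1]

lemma cs_lemma {S : Set (ℝ × ℝ)} (hSm : MeasurableSet S) (hfin : volume S ≠ ⊤)
    (f : ℝ × ℝ → ℝ) (hf : IntegrableOn f S) (hf2 : IntegrableOn (fun x => f x ^ 2) S) :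
    (∫ x in S, f x) ^ 2 ≤ (volume S).toReal * ∫ x in S, f x ^ 2 := by
  by_cases h0 : volume S = 0
  · rw [Measure.restrict_eq_zero.mpr h0]
    simp
  · have hδ : 0 < (volume S).toReal := ENNReal.toReal_pos h0 hfin
    set δ := (volume S).toReal with hδdef
    set I := ∫ x in S, f x with hI
    set c := I / δ with hc
    have key : 0 ≤ ∫ x in S, (f x - c) ^ 2 :=
      setIntegral_nonneg hSm fun x _ => sq_nonneg _
    have expand : ∫ x in S, (f x - c) ^ 2
        = (∫ x in S, f x ^ 2) - 2 * c * I + c ^ 2 * δ := by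
      have h1 : ∀ x : ℝ × ℝ, (f x - c) ^ 2 = f x ^ 2 - (2 * c) * f x + c ^ 2 := by
        intro x; ring
      simp_rw [h1]
      rw [integral_add (by exact hf2.sub (hf.const_mul (2*c)))
          (integrableOn_const (C := c ^ 2) hfin),
        integral_sub hf2 (hf.const_mul (2*c)), MeasureTheory.integral_const_mul,
        setIntegral_const]
      simp [hδdef, ← hI, Measure.real]
      ring
    have hIc : I = c * δ := by rw [hc, div_mul_cancel₀ _ hδ.ne']
    nlinarith [key, expand, sq_nonneg c]

lemma sum_inv_odd_le (N : ℕ) :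
    ∑ i ∈ Finset.range (N + 1), (1 : ℝ) / (2 * (i : ℝ) + 1)
      ≤ 1 + (1 / 2) * Real.log (2 * (N : ℝ) + 1) := by
  induction N with
  | zero => simp
  | succ n ih =>
    rw [Finset.sum_range_succ]
    have h1 : (0:ℝ) < 2 * (n:ℝ) + 1 := by positivity
    have h2 : (0:ℝ) < 2 * (n:ℝ) + 3 := by positivity
    have hlog : Real.log ((2 * (n:ℝ) + 1) / (2 * (n:ℝ) + 3))
        ≤ (2 * (n:ℝ) + 1) / (2 * (n:ℝ) + 3) - 1 :=
      Real.log_le_sub_one_of_pos (by positivity)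
    rw [Real.log_div h1.ne' h2.ne'] at hlog
    have hfr : (2 * (n:ℝ) + 1) / (2 * (n:ℝ) + 3) - 1 = -(2 / (2 * (n:ℝ) + 3)) := by
      field_simp
      norm_num
    rw [hfr] at hlog
    have hcast : 2 * ((n:ℝ) + 1) + 1 = 2 * (n:ℝ) + 3 := by ring
    push_cast
    rw [hcast]
    have hterm : 1 / (2 * (n:ℝ) + 3) ≤ (1/2) * (Real.log (2*(n:ℝ)+3) - Real.log (2*(n:ℝ)+1)) := by
      have h3 : (2:ℝ)/(2*(n:ℝ)+3) = 2*(1/(2*(n:ℝ)+3)) := by ring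
      linarith [hlog]
    linarith [ih]

/-- The Euclidean distance of the geometric moment vectors is controlled by
the Nikodym distance:
`(∑_{i,j=0}^N (μ_{ij}(K) - μ_{ij}(L))²)^{1/2} ≤ (1 + (1/2)ln(2N+1)) δ_N(K,L)^{1/2}`. -/
theorem moment_distance_le_nikodym (K L : Set (ℝ × ℝ))
    (hK : IsConvexBody K) (hKs : K ⊆ unitSq) (hL : IsConvexBody L) (hLs : L ⊆ unitSq)
    (N : ℕ) :
    Real.sqrt (∑ i ∈ Finset.range (N + 1), ∑ j ∈ Finset.range (N + 1),
        (geomMoment i j K - geomMoment i j L) ^ 2) ≤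
      (1 + (1 / 2) * Real.log (2 * (N : ℝ) + 1)) * Real.sqrt (nikodymDist K L) := by
  obtain ⟨hKc, -, -⟩ := hK
  obtain ⟨hLc, -, -⟩ := hL
  have hKm : MeasurableSet K := hKc.isClosed.measurableSet
  have hLm : MeasurableSet L := hLc.isClosed.measurableSet
  set Δ : Set (ℝ × ℝ) := (K \ L) ∪ (L \ K) with hΔdef
  have hΔm : MeasurableSet Δ := (hKm.diff hLm).union (hLm.diff hKm)
  have hΔs : Δ ⊆ unitSq := by
    rintro x (h | h)
    · exact hKs h.1
    · exact hLs h.1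
  have hfin : volume Δ ≠ ⊤ :=
    (lt_of_le_of_lt (measure_mono hΔs) unitSq_compact.measure_lt_top).ne
  have hδ0 : (0:ℝ) ≤ nikodymDist K L := ENNReal.toReal_nonneg
  have hδΔ : nikodymDist K L = (volume Δ).toReal := rfl
  -- per-term bound
  have hterm : ∀ i j : ℕ, (geomMoment i j K - geomMoment i j L) ^ 2
      ≤ nikodymDist K L * ((1 / (2 * (i:ℝ) + 1)) * (1 / (2 * (j:ℝ) + 1))) := by
    intro i j
    set f : ℝ × ℝ → ℝ := fun x => x.1 ^ i * x.2 ^ j with hf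
    have hint : ∀ S : Set (ℝ × ℝ), S ⊆ unitSq → IntegrableOn f S volume := fun S hS =>
      (integrableOn_unitSq i j).mono_set hS
    have hnonneg : ∀ x ∈ unitSq, 0 ≤ f x := by
      intro x hx
      exact mul_nonneg (pow_nonneg hx.1.1 _) (pow_nonneg hx.1.2 _)
    have hgK : geomMoment i j K = ∫ x in K, f x := rfl
    have hgL : geomMoment i j L = ∫ x in L, f x := rfl
    have h1 := MeasureTheory.integral_inter_add_diff (μ := volume) (f := f) hLm (hint K hKs)
    have h2 := MeasureTheory.integral_inter_add_diff (μ := volume) (f := f) hKm (hint L hLs)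
    rw [Set.inter_comm L K] at h2
    have hAeq : geomMoment i j K - geomMoment i j L
        = (∫ x in K \ L, f x) - (∫ x in L \ K, f x) := by
      rw [hgK, hgL]; linarith [h1, h2]
    have hA : 0 ≤ ∫ x in K \ L, f x :=
      setIntegral_nonneg (hKm.diff hLm) fun x hx => hnonneg x (hKs hx.1)
    have hB : 0 ≤ ∫ x in L \ K, f x :=
      setIntegral_nonneg (hLm.diff hKm) fun x hx => hnonneg x (hLs hx.1)
    have hU : (∫ x in Δ, f x) = (∫ x in K \ L, f x) + (∫ x in L \ K, f x) :=
      setIntegral_union disjoint_sdiff_sdiff (hLm.diff hKm)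
        (hint _ fun x hx => hKs hx.1) (hint _ fun x hx => hLs hx.1)
    have hf2eq : (fun x : ℝ × ℝ => f x ^ 2) = fun x : ℝ × ℝ => x.1 ^ (2*i) * x.2 ^ (2*j) := by
      funext x; simp only [hf]; ring
    have hf2int : IntegrableOn (fun x => f x ^ 2) Δ volume := by
      rw [hf2eq]; exact (integrableOn_unitSq (2*i) (2*j)).mono_set hΔs
    have hcs := cs_lemma hΔm hfin f (hint Δ hΔs) hf2int
    have hmono : (∫ x in Δ, f x ^ 2) ≤ (1 / (2 * (i:ℝ) + 1)) * (1 / (2 * (j:ℝ) + 1)) := by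
      have hle : (∫ x in Δ, x.1 ^ (2*i) * x.2 ^ (2*j))
          ≤ ∫ x in unitSq, x.1 ^ (2*i) * x.2 ^ (2*j) :=
        setIntegral_mono_set (integrableOn_unitSq (2*i) (2*j))
          (Filter.Eventually.of_forall fun x =>
            mul_nonneg ((even_two_mul i).pow_nonneg _) ((even_two_mul j).pow_nonneg _))
          (HasSubset.Subset.eventuallyLE hΔs)
      rw [integral_unitSq_pow] at hle
      have hcasts : (((2*i : ℕ) : ℝ) + 1) = 2 * (i:ℝ) + 1 := by push_cast; ring
      have hcasts2 : (((2*j : ℕ) : ℝ) + 1) = 2 * (j:ℝ) + 1 := by push_cast; ring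
      rw [hcasts, hcasts2] at hle
      calc (∫ x in Δ, f x ^ 2) = ∫ x in Δ, x.1 ^ (2*i) * x.2 ^ (2*j) := by rw [hf2eq]
        _ ≤ _ := hle
    have hsq : (geomMoment i j K - geomMoment i j L) ^ 2 ≤ (∫ x in Δ, f x) ^ 2 := by
      rw [hAeq, hU]; nlinarith [hA, hB]
    calc (geomMoment i j K - geomMoment i j L) ^ 2 ≤ (∫ x in Δ, f x) ^ 2 := hsq
      _ ≤ (volume Δ).toReal * ∫ x in Δ, f x ^ 2 := hcs
      _ ≤ (volume Δ).toReal * ((1 / (2 * (i:ℝ) + 1)) * (1 / (2 * (j:ℝ) + 1))) :=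
          mul_le_mul_of_nonneg_left hmono ENNReal.toReal_nonneg
      _ = nikodymDist K L * ((1 / (2 * (i:ℝ) + 1)) * (1 / (2 * (j:ℝ) + 1))) := by rw [hδΔ]
  set S := ∑ i ∈ Finset.range (N + 1), (1:ℝ) / (2 * (i:ℝ) + 1) with hSdef
  have hSnn : 0 ≤ S := Finset.sum_nonneg fun i _ => by positivity
  have hsum : (∑ i ∈ Finset.range (N + 1), ∑ j ∈ Finset.range (N + 1),
      (geomMoment i j K - geomMoment i j L) ^ 2) ≤ nikodymDist K L * S ^ 2 := by
    calc (∑ i ∈ Finset.range (N + 1), ∑ j ∈ Finset.range (N + 1),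
        (geomMoment i j K - geomMoment i j L) ^ 2)
        ≤ ∑ i ∈ Finset.range (N + 1), ∑ j ∈ Finset.range (N + 1),
          nikodymDist K L * ((1 / (2 * (i:ℝ) + 1)) * (1 / (2 * (j:ℝ) + 1))) :=
        Finset.sum_le_sum fun i _ => Finset.sum_le_sum fun j _ => hterm i j
      _ = nikodymDist K L * S ^ 2 := by
        simp_rw [← Finset.mul_sum, ← Finset.sum_mul, hSdef]
        ring
  have h1 : Real.sqrt (∑ i ∈ Finset.range (N + 1), ∑ j ∈ Finset.range (N + 1),
      (geomMoment i j K - geomMoment i j L) ^ 2)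
      ≤ Real.sqrt (nikodymDist K L * S ^ 2) := Real.sqrt_le_sqrt hsum
  rw [Real.sqrt_mul hδ0, Real.sqrt_sq hSnn] at h1
  calc Real.sqrt (∑ i ∈ Finset.range (N + 1), ∑ j ∈ Finset.range (N + 1),
      (geomMoment i j K - geomMoment i j L) ^ 2)
      ≤ Real.sqrt (nikodymDist K L) * S := h1
    _ ≤ Real.sqrt (nikodymDist K L) * (1 + (1/2) * Real.log (2 * (N:ℝ) + 1)) :=
        mul_le_mul_of_nonneg_left (sum_inv_odd_le N) (Real.sqrt_nonneg _)
    _ = (1 + (1/2) * Real.log (2 * (N:ℝ) + 1)) * Real.sqrt (nikodymDist K L) := mul_comm _ _
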